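/- For any integer n > 1 and any prime p, the p-adic valuation of the greatest common divisor of the binomial coefficients C(n, k) for 0 < k < n equals 1 if n is a power of p (n = p^i for some i ≥ 0 with n > 1), and equals 0 otherwise. -/

import Mathlib

open Classical in
theorem stmt_1 (n p : ℕ) (hn : 1 < n) (hp : p.Prime) :
    padicValNat p ((Finset.Ioo 0 n).gcd (fun k => n.choose k)) =
      if ∃ i : ℕ, n = p ^ i then 1 else 0 := by
  haveI : Fact p.Prime := ⟨hp⟩
  set G := (Finset.Ioo 0 n).gcd (fun k => n.choose k) with hGdef
  have h1mem : (1 : ℕ) ∈ Finset.Ioo 0 n := by simp [hn]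
  have hGdvdn : G ∣ n := by
    have := Finset.gcd_dvd (f := fun k => n.choose k) h1mem
    simpa using this
  have hG0 : G ≠ 0 := fun h => by simp [h] at hGdvdn; omega
  by_cases h : ∃ i : ℕ, n = p ^ i
  · obtain ⟨i, rfl⟩ := h
    have hi : 1 ≤ i := by
      by_contra hi
      interval_cases i
      simp at hn
    -- p divides every binomial coefficient, hence G
    have hpG : p ∣ G := by
      apply Finset.dvd_gcd
      intro k hk
      rw [Finset.mem_Ioo] at hk
      exact Nat.Prime.dvd_choose_pow hp (by omega) (by omega)
    -- valuation of choose (p^i) (p^(i-1)) equals 1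
    have hkle : p ^ (i - 1) ≤ p ^ i := Nat.pow_le_pow_right hp.pos (by omega)
    have hC0 : (p ^ i).choose (p ^ (i - 1)) ≠ 0 :=
      (Nat.choose_pos hkle).ne'
    have hval : padicValNat p ((p ^ i).choose (p ^ (i - 1))) = 1 := by
      have h1 : emultiplicity p ((p ^ i).choose (p ^ (i - 1))) = ((i - (i - 1) : ℕ) : ℕ∞) := by
        rw [Nat.Prime.emultiplicity_choose_prime_pow hp hkle (pow_pos hp.pos _).ne',
          multiplicity_pow_self_of_prime hp.prime]
      have h2 := padicValNat_eq_emultiplicity (p := p) (Nat.choose_pos hkle).ne'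
      rw [h1] at h2
      have h3 : padicValNat p ((p ^ i).choose (p ^ (i - 1))) = i - (i - 1) := by
        exact_mod_cast h2
      omega
    have hdvdC : G ∣ (p ^ i).choose (p ^ (i - 1)) := by
      have hmem : p ^ (i - 1) ∈ Finset.Ioo 0 (p ^ i) := by
        rw [Finset.mem_Ioo]
        exact ⟨pow_pos hp.pos _, Nat.pow_lt_pow_right hp.one_lt (by omega)⟩
      exact Finset.gcd_dvd (f := fun k => (p ^ i).choose k) hmem
    have hle : padicValNat p G ≤ 1 := by
      rw [← hval]
      rw [← padicValNat_dvd_iff_le hC0]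
      exact dvd_trans pow_padicValNat_dvd hdvdC
    have hge : 1 ≤ padicValNat p G :=
      one_le_padicValNat_of_dvd hG0 hpG
    rw [if_pos (⟨i, rfl⟩ : ∃ j : ℕ, p ^ i = p ^ j)]
    omega
  · rw [if_neg h]
    set v := padicValNat p n with hv
    have hpvdvd : p ^ v ∣ n := pow_padicValNat_dvd
    have hn0 : n ≠ 0 := by omega
    have hpvlt : p ^ v < n := lt_of_le_of_ne (Nat.le_of_dvd (by omega) hpvdvd)
      (fun he => h ⟨v, he.symm⟩)
    -- no carries when adding p^v and n - p^v in base p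
    have hkummer : padicValNat p (n.choose (p ^ v)) = 0 := by
      rw [padicValNat_choose (le_of_lt hpvlt) (Nat.lt_succ_self _)]
      rw [Finset.card_eq_zero, Finset.filter_eq_empty_iff]
      intro i hi
      rw [Finset.mem_Ico] at hi
      rw [not_le]
      rcases le_or_gt i v with hiv | hiv
      · have h1 : p ^ i ∣ p ^ v := pow_dvd_pow p hiv
        have h2 : p ^ i ∣ n := h1.trans hpvdvd
        have h3 : p ^ v % p ^ i = 0 := Nat.mod_eq_zero_of_dvd h1
        have h4 : (n - p ^ v) % p ^ i = 0 := Nat.mod_eq_zero_of_dvd (Nat.dvd_sub h2 h1)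
        rw [h3, h4]
        exact pow_pos hp.pos _
      · have hpvlti : p ^ v < p ^ i := Nat.pow_lt_pow_right hp.one_lt hiv
        have hmodne : n % p ^ i ≠ 0 := by
          intro hzero
          have : p ^ (v + 1) ∣ n := dvd_trans (pow_dvd_pow p hiv) (Nat.dvd_of_mod_eq_zero hzero)
          exact pow_succ_padicValNat_not_dvd hn0 this
        have hpvlemod : p ^ v ≤ n % p ^ i := by
          apply Nat.le_of_dvd (Nat.pos_of_ne_zero hmodne)
          rw [Nat.dvd_mod_iff (pow_dvd_pow p (le_of_lt hiv))]
          exact hpvdvd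
        have hmodlt : n % p ^ i < p ^ i := Nat.mod_lt _ (pow_pos hp.pos _)
        have hsplit : n - p ^ v = p ^ i * (n / p ^ i) + (n % p ^ i - p ^ v) := by
          have := Nat.div_add_mod n (p ^ i)
          omega
        have hsub : (n - p ^ v) % p ^ i = n % p ^ i - p ^ v := by
          rw [hsplit, Nat.mul_add_mod, Nat.mod_eq_of_lt (by omega)]
        rw [hsub, Nat.mod_eq_of_lt hpvlti]
        omega
    have hpnC : ¬ p ∣ n.choose (p ^ v) := by
      intro hdvd
      have : 1 ≤ padicValNat p (n.choose (p ^ v)) :=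
        one_le_padicValNat_of_dvd (Nat.choose_pos (le_of_lt hpvlt)).ne' hdvd
      omega
    have hGdvdC : G ∣ n.choose (p ^ v) := by
      have hmem : p ^ v ∈ Finset.Ioo 0 n := by
        rw [Finset.mem_Ioo]; exact ⟨pow_pos hp.pos _, hpvlt⟩
      exact Finset.gcd_dvd (f := fun k => n.choose k) hmem
    exact padicValNat.eq_zero_of_not_dvd (fun hpd => hpnC (hpd.trans hGdvdC))
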